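/- Let $(\underline{s},\underline{t})\in[p]^k\times[n]^k$ be a closed path visiting $r$ distinct rows and $c$ distinct columns, with $\ell=r+c$. If $k+2\leq\ell\leq 2k$, then the associated bipartite multigraph contains at least $2\ell-2k-2\geq 2$ single edges (edges of multiplicity $1$). -/

import Mathlib

/-- Cyclic successor on `Fin k`. -/
def cycSucc {k : ℕ} (i : Fin k) : Fin k :=
  ⟨(i.val + 1) % k, Nat.mod_lt _ i.pos⟩

/-- The `2k` edge instances of the bipartite multigraph spanned by `(s,t)`:
for each `i`, the down edge `(s i, t i)` and the up edge `(s (i+1), t i)` (cyclically). -/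
def edges {p n k : ℕ} (s : Fin k → Fin p) (t : Fin k → Fin n) :
    Fin k × Bool → Fin p × Fin n :=
  fun ib => if ib.2 then (s (cycSucc ib.1), t ib.1) else (s ib.1, t ib.1)

/-- Multiplicity of the edge `e` in the multigraph spanned by `(s,t)`. -/
def mult {p n k : ℕ} (s : Fin k → Fin p) (t : Fin k → Fin n) (e : Fin p × Fin n) : ℕ :=
  (Finset.univ.filter (fun j => edges s t j = e)).card

/-- `ρ_ℓ`: the number of distinct edges of multiplicity exactly `ℓ`. -/
def rho {p n k : ℕ} (s : Fin k → Fin p) (t : Fin k → Fin n) (l : ℕ) : ℕ :=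
  ((Finset.univ.image (edges s t)).filter (fun e => mult s t e = l)).card

/-- Total number of distinct vertices: distinct S-nodes plus distinct T-nodes. -/
def numV {p n k : ℕ} (s : Fin k → Fin p) (t : Fin k → Fin n) : ℕ :=
  (Finset.univ.image s).card + (Finset.univ.image t).card

namespace Stmt11Aux

variable {p n k : ℕ}

/-- The walk's vertex sequence. -/
def wv (hk : 0 < k) (s : Fin k → Fin p) (t : Fin k → Fin n) (j : ℕ) : Fin p ⊕ Fin n :=
  if j % 2 = 0 then Sum.inl (s ⟨j / 2 % k, Nat.mod_lt _ hk⟩)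
  else Sum.inr (t ⟨j / 2 % k, Nat.mod_lt _ hk⟩)

/-- The walk's edge sequence. -/
def ev (hk : 0 < k) (s : Fin k → Fin p) (t : Fin k → Fin n) (j : ℕ) : Fin p × Fin n :=
  edges s t (⟨j / 2 % k, Nat.mod_lt _ hk⟩, decide (j % 2 = 1))

lemma endpoints (hk : 0 < k) (s : Fin k → Fin p) (t : Fin k → Fin n) (j : ℕ) :
    (wv hk s t j = Sum.inl (ev hk s t j).1 ∧ wv hk s t (j+1) = Sum.inr (ev hk s t j).2) ∨
    (wv hk s t j = Sum.inr (ev hk s t j).2 ∧ wv hk s t (j+1) = Sum.inl (ev hk s t j).1) := by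
  rcases Nat.even_or_odd j with ⟨i, hi⟩ | ⟨i, hi⟩
  · left
    subst hi
    have h1 : (i + i) % 2 = 0 := by omega
    have h2 : (i + i) / 2 = i := by omega
    have h3 : (i + i + 1) % 2 = 1 := by omega
    have h4 : (i + i + 1) / 2 = i := by omega
    simp [wv, ev, edges, h1, h2, h3, h4]
  · right
    subst hi
    have h1 : (2 * i + 1) % 2 = 1 := by omega
    have h2 : (2 * i + 1) / 2 = i := by omega
    have h3 : (2 * i + 1 + 1) % 2 = 0 := by omega
    have h4 : (2 * i + 1 + 1) / 2 = i + 1 := by omega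
    have h5 : (i % k + 1) % k = (i + 1) % k := Nat.mod_add_mod i k 1
    simp [wv, ev, edges, cycSucc, h1, h2, h3, h4, h5]

lemma card_walk_le (hk : 0 < k) (s : Fin k → Fin p) (t : Fin k → Fin n) :
    ∀ m, 1 ≤ m →
    ((Finset.range m).image (wv hk s t)).card ≤
      ((Finset.range (m - 1)).image (ev hk s t)).card + 1 := by
  intro m
  induction m with
  | zero => omega
  | succ m ih =>
    intro _
    rcases Nat.eq_zero_or_pos m with rfl | hm
    · simp
    have hrange : Finset.range (m + 1) = insert m (Finset.range m) := by
      rw [Finset.range_add_one]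
    rw [hrange, Finset.image_insert]
    by_cases hnew : wv hk s t m ∈ (Finset.range m).image (wv hk s t)
    · rw [Finset.insert_eq_self.mpr hnew]
      refine le_trans (ih hm) ?_
      have : (m - 1 : ℕ) ≤ m + 1 - 1 := by omega
      exact Nat.add_le_add_right
        (Finset.card_le_card (Finset.image_subset_image (Finset.range_subset_range.mpr this))) 1
    · -- new vertex: the edge ev (m-1) is new
      have hm1 : m - 1 + 1 = m := by omega
      have hednew : ev hk s t (m - 1) ∉ (Finset.range (m - 1)).image (ev hk s t) := by
        intro hmem
        rcases Finset.mem_image.mp hmem with ⟨j, hj, hje⟩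
        rw [Finset.mem_range] at hj
        apply hnew
        have hep := endpoints hk s t j
        have hep2 := endpoints hk s t (m - 1)
        rw [hm1] at hep2
        -- wv m is an endpoint of ev (m-1) = ev j, whose endpoints are wv j, wv (j+1)
        rcases hep2 with ⟨_, h2⟩ | ⟨_, h2⟩ <;> rw [← hje] at h2 <;>
          rcases hep with ⟨ha, hb⟩ | ⟨ha, hb⟩
        · exact Finset.mem_image.mpr ⟨j + 1, Finset.mem_range.mpr (by omega), by rw [hb, h2]⟩
        · exact Finset.mem_image.mpr ⟨j, Finset.mem_range.mpr (by omega), by rw [ha, h2]⟩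
        · exact Finset.mem_image.mpr ⟨j, Finset.mem_range.mpr (by omega), by rw [ha, h2]⟩
        · exact Finset.mem_image.mpr ⟨j + 1, Finset.mem_range.mpr (by omega), by rw [hb, h2]⟩
      have hr2 : Finset.range (m + 1 - 1) = insert (m - 1) (Finset.range (m - 1)) := by
        have : m + 1 - 1 = (m - 1) + 1 := by omega
        rw [this, Finset.range_add_one]
      rw [hr2, Finset.image_insert,
        Finset.card_insert_of_notMem hnew, Finset.card_insert_of_notMem hednew]
      exact Nat.add_le_add_right (ih hm) 1

lemma walk_image_eq (hk : 0 < k) (s : Fin k → Fin p) (t : Fin k → Fin n) :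
    (Finset.range (2 * k)).image (wv hk s t) =
      (Finset.univ.image s).image Sum.inl ∪ (Finset.univ.image t).image Sum.inr := by
  ext x
  simp only [Finset.mem_image, Finset.mem_union, Finset.mem_range]
  constructor
  · rintro ⟨j, hj, rfl⟩
    unfold wv
    split
    · exact Or.inl ⟨_, ⟨_, Finset.mem_univ _, rfl⟩, rfl⟩
    · exact Or.inr ⟨_, ⟨_, Finset.mem_univ _, rfl⟩, rfl⟩
  · rintro (⟨a, ⟨i, _, rfl⟩, rfl⟩ | ⟨a, ⟨i, _, rfl⟩, rfl⟩)
    · refine ⟨2 * i.val, by omega, ?_⟩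
      have h1 : (2 * i.val) % 2 = 0 := by omega
      have h2 : (2 * i.val) / 2 = i.val := by omega
      have h3 : i.val % k = i.val := Nat.mod_eq_of_lt i.isLt
      simp [wv, h1, h2, h3]
    · refine ⟨2 * i.val + 1, by omega, ?_⟩
      have h1 : (2 * i.val + 1) % 2 = 1 := by omega
      have h2 : (2 * i.val + 1) / 2 = i.val := by omega
      have h3 : i.val % k = i.val := Nat.mod_eq_of_lt i.isLt
      simp [wv, h1, h2, h3]

lemma edges_card_ge (hk : 0 < k) (s : Fin k → Fin p) (t : Fin k → Fin n) :
    numV s t ≤ (Finset.univ.image (edges s t)).card + 1 := by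
  have h1 := card_walk_le hk s t (2 * k) (by omega)
  have h2 : ((Finset.range (2 * k)).image (wv hk s t)).card = numV s t := by
    rw [walk_image_eq hk s t, Finset.card_union_of_disjoint, Finset.card_image_of_injective _
      Sum.inl_injective, Finset.card_image_of_injective _ Sum.inr_injective]
    · rfl
    · simp [Finset.disjoint_left]
  have h3 : (Finset.range (2 * k - 1)).image (ev hk s t) ⊆
      Finset.univ.image (edges s t) := by
    intro x hx
    rcases Finset.mem_image.mp hx with ⟨j, _, rfl⟩
    exact Finset.mem_image.mpr ⟨_, Finset.mem_univ _, rfl⟩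
  have := Finset.card_le_card h3
  omega

end Stmt11Aux

/-- if `k+2 ≤ ℓ ≤ 2k`, then the bipartite multigraph of `(s,t)` contains at
least `2ℓ - 2k - 2 ≥ 2` single edges (edges of multiplicity 1). -/
theorem stmt11 (p n k : ℕ) (s : Fin k → Fin p) (t : Fin k → Fin n)
    (h1 : k + 2 ≤ numV s t) (h2 : numV s t ≤ 2 * k) :
    (2 : ℤ) ≤ 2 * (numV s t : ℤ) - 2 * k - 2 ∧
    2 * (numV s t : ℤ) - 2 * k - 2 ≤
      (((Finset.univ.image (edges s t)).filter (fun e => mult s t e = 1)).card : ℤ) := by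
  have hk : 0 < k := by
    rcases Nat.eq_zero_or_pos k with rfl | hk
    · exfalso
      have : numV s t = 0 := by simp [numV]
      omega
    · exact hk
  have hE := Stmt11Aux.edges_card_ge hk s t
  set G := Finset.univ.image (edges s t) with hG
  set G1 := G.filter (fun e => mult s t e = 1) with hG1
  set G2 := G.filter (fun e => ¬ mult s t e = 1) with hG2
  -- total multiplicity is 2k
  have hsum : ∑ e ∈ G, mult s t e = 2 * k := by
    rw [hG]
    simp only [mult]
    rw [← Finset.card_eq_sum_card_image (edges s t) Finset.univ]
    simp only [Finset.card_univ, Fintype.card_prod, Fintype.card_fin, Fintype.card_bool]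
    omega
  have hsplit : G1.card + G2.card = G.card := by
    rw [hG1, hG2]
    exact Finset.card_filter_add_card_filter_not _
  have hsum_split : ∑ e ∈ G1, mult s t e + ∑ e ∈ G2, mult s t e = 2 * k := by
    rw [← hsum, hG1, hG2]
    exact Finset.sum_filter_add_sum_filter_not _ _ _
  have hG1sum : ∑ e ∈ G1, mult s t e = G1.card := by
    rw [Finset.sum_congr rfl (fun e he => (Finset.mem_filter.mp he).2)]
    simp [hG1]
  have hG2sum : 2 * G2.card ≤ ∑ e ∈ G2, mult s t e := by
    rw [mul_comm]
    have : ∀ e ∈ G2, 2 ≤ mult s t e := by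
      intro e he
      rcases Finset.mem_filter.mp he with ⟨heG, hne⟩
      rcases Finset.mem_image.mp heG with ⟨j, _, rfl⟩
      have hpos : 0 < mult s t (edges s t j) := by
        rw [mult]
        exact Finset.card_pos.mpr ⟨j, Finset.mem_filter.mpr ⟨Finset.mem_univ _, rfl⟩⟩
      omega
    calc G2.card * 2 = ∑ _e ∈ G2, 2 := by rw [Finset.sum_const, smul_eq_mul]
      _ ≤ ∑ e ∈ G2, mult s t e := Finset.sum_le_sum this
  -- combine
  have key : 2 * G.card ≤ 2 * k + G1.card := by omega
  constructor
  · omega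
  · have : numV s t ≤ G.card + 1 := hE
    omega
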